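/- Let (A, φ) and (A⁽ᵏ⁾, φ⁽ᵏ⁾) be C*-probability spaces adapted to families X = {X_m} and X⁽ᵏ⁾ = {X_m⁽ᵏ⁾} respectively (so the GNS representations of φ and φ⁽ᵏ⁾ are isometric on the dense *-algebra of polynomials). If X⁽ᵏ⁾ converges to X in moments — i.e. φ⁽ᵏ⁾(P(X⁽ᵏ⁾)) → φ(P(X)) for every *-polynomial P — then for every *-polynomial P and every nonprincipal ultrafilter 𝒰, ‖P(X)‖ ≤ lim_𝒰 ‖P(X⁽ᵏ⁾)‖. -/

import Mathlib

open Filter Topology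

section Aux

variable {B : Type*} [NormedRing B] [StarRing B] [CStarRing B] [CompleteSpace B]
    [NormedAlgebra ℂ B] [StarModule ℂ B]

lemma aux_upper (ψ : B →ₗ[ℂ] ℂ) (hψ1 : ψ 1 = 1)
    (hpos : ∀ b : B, 0 ≤ (ψ (star b * b)).re) (a : B) (n : ℕ) :
    (ψ ((star a * a) ^ n) ).re ≤ (‖a‖ * ‖a‖) ^ n := by
  letI : CStarAlgebra B := { ‹NormedRing B›, ‹StarRing B›, ‹CStarRing B›, ‹CompleteSpace B›,
    ‹NormedAlgebra ℂ B›, ‹StarModule ℂ B› with }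
  letI := CStarAlgebra.spectralOrder B
  haveI := CStarAlgebra.spectralOrderedRing B
  -- monotonicity of re ∘ ψ
  have mono : ∀ x y : B, x ≤ y → (ψ x).re ≤ (ψ y).re := by
    intro x y hxy
    have h0 : (0:B) ≤ y - x := sub_nonneg.mpr hxy
    have hs : star (CFC.sqrt (y - x)) * CFC.sqrt (y - x) = y - x := by
      rw [(IsSelfAdjoint.of_nonneg (CFC.sqrt_nonneg _)).star_eq, CFC.sqrt_mul_sqrt_self _ h0]
    have := hpos (CFC.sqrt (y - x))
    rw [hs, map_sub] at this
    simpa [sub_nonneg] using this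
  have hsmul : ∀ (r : ℝ) (x : B), ψ (r • x) = r • ψ x := fun r x => ψ.map_smul_of_tower r x
  rcases Nat.eq_zero_or_pos n with rfl | hn
  · simp [hψ1]
  · have hsa : IsSelfAdjoint ((star a * a) ^ n) := (IsSelfAdjoint.star_mul_self a).pow n
    have hle := IsSelfAdjoint.le_algebraMap_norm_self hsa
    have h2 := mono _ _ hle
    rw [Algebra.algebraMap_eq_smul_one, hsmul, hψ1] at h2
    calc (ψ ((star a * a) ^ n)).re ≤ (‖(star a * a) ^ n‖ • (1:ℂ)).re := h2
      _ = ‖(star a * a) ^ n‖ := by simp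
      _ ≤ ‖star a * a‖ ^ n := norm_pow_le' _ hn
      _ = (‖a‖ * ‖a‖) ^ n := by rw [CStarRing.norm_star_mul_self]

set_option maxHeartbeats 1000000 in
lemma aux_lower (ψ : B →ₗ[ℂ] ℂ)
    (hpos : ∀ b : B, 0 ≤ (ψ (star b * b)).re) (him : ∀ b : B, (ψ (star b * b)).im = 0)
    (hfaith : ∀ b : B, ψ (star b * b) = 0 → b = 0)
    (a : B) (hb0 : star a * a ≠ 0) {ε : ℝ} (hε : 0 < ε) (hεr : ε < ‖star a * a‖) :
    ∃ c > 0, ∀ n : ℕ, c * (‖star a * a‖ - ε) ^ n ≤ (ψ ((star a * a) ^ n)).re := by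
  letI : CStarAlgebra B := { ‹NormedRing B›, ‹StarRing B›, ‹CStarRing B›, ‹CompleteSpace B›,
    ‹NormedAlgebra ℂ B›, ‹StarModule ℂ B› with }
  letI := CStarAlgebra.spectralOrder B
  haveI := CStarAlgebra.spectralOrderedRing B
  haveI : Nontrivial B := nontrivial_of_ne _ _ hb0
  have mono : ∀ x y : B, x ≤ y → (ψ x).re ≤ (ψ y).re := by
    intro x y hxy
    have h0 : (0:B) ≤ y - x := sub_nonneg.mpr hxy
    have hs : star (CFC.sqrt (y - x)) * CFC.sqrt (y - x) = y - x := by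
      rw [(IsSelfAdjoint.of_nonneg (CFC.sqrt_nonneg _)).star_eq, CFC.sqrt_mul_sqrt_self _ h0]
    have := hpos (CFC.sqrt (y - x))
    rw [hs, map_sub] at this
    simpa [sub_nonneg] using this
  set b := star a * a with hb
  set r := ‖b‖ with hr
  have hbnn : (0:B) ≤ b := star_mul_self_nonneg a
  have hbsa : IsSelfAdjoint b := IsSelfAdjoint.star_mul_self a
  set g : ℝ → ℝ := fun t => min 1 (max 0 ((t - (r - ε)) / ε)) with hg
  have hgc : Continuous g :=
    continuous_const.min (continuous_const.max ((continuous_id.sub continuous_const).div_const ε))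
  have hg0 : ∀ t, 0 ≤ g t := fun t => le_min zero_le_one (le_max_left 0 _)
  have hg1 : ∀ t, g t ≤ 1 := fun t => min_le_left _ _
  have hgr : g r = 1 := by
    simp only [hg]
    rw [show r - (r - ε) = ε by ring, div_self hε.ne']
    norm_num
  set y := cfc g b with hy
  have hysa : IsSelfAdjoint y := cfc_predicate g b
  -- y ≠ 0
  have hrmem : r ∈ spectrum ℝ b := CStarAlgebra.norm_mem_spectrum_of_nonneg hbnn
  have h1mem : (1:ℝ) ∈ spectrum ℝ y := by
    rw [hy, cfc_map_spectrum g b hbsa hgc.continuousOn]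
    exact ⟨r, hrmem, hgr⟩
  have hy0 : y ≠ 0 := by
    intro h
    rw [h, CFC.spectrum_zero_eq] at h1mem
    exact one_ne_zero (Set.mem_singleton_iff.mp h1mem)
  -- the constant
  set c := (ψ (star y * y)).re with hc
  have hcpos : 0 < c := by
    rcases lt_or_eq_of_le (hpos y) with h | h
    · exact h
    · exfalso
      apply hy0
      apply hfaith
      apply Complex.ext
      · exact h.symm
      · simpa using him y
  refine ⟨c, hcpos, fun n => ?_⟩
  -- spectrum bounds
  have hspec : ∀ t ∈ spectrum ℝ b, 0 ≤ t ∧ t ≤ r := by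
    intro t ht
    refine ⟨spectrum_nonneg_of_nonneg hbnn ht, ?_⟩
    exact (le_abs_self t).trans (by simpa [Real.norm_eq_abs] using spectrum.norm_le_norm_of_mem ht)
  -- pointwise inequality
  have hpt : ∀ t ∈ spectrum ℝ b, (r - ε) ^ n * (g t * g t) ≤ t ^ n := by
    intro t ht
    obtain ⟨ht0, htr⟩ := hspec t ht
    rcases le_or_gt t (r - ε) with h | h
    · have : g t = 0 := by
        simp only [hg]
        rw [max_eq_left (div_nonpos_iff.mpr (Or.inr ⟨sub_nonpos.mpr h, hε.le⟩)),
          min_eq_right zero_le_one]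
      rw [this]
      simpa using pow_nonneg ht0 n
    · have hre : 0 ≤ r - ε := sub_nonneg.mpr hεr.le
      calc (r - ε) ^ n * (g t * g t) ≤ (r - ε) ^ n * 1 := by
            apply mul_le_mul_of_nonneg_left _ (pow_nonneg hre n)
            exact mul_le_one₀ (hg1 t) (hg0 t) (hg1 t)
        _ = (r - ε) ^ n := mul_one _
        _ ≤ t ^ n := pow_le_pow_left₀ hre h.le n
  -- cfc inequality
  have hcfc : ((r - ε) ^ n : ℝ) • (y * y) ≤ b ^ n := by
    have hcont1 : ContinuousOn (fun t : ℝ => (r - ε) ^ n * (g t * g t)) (spectrum ℝ b) :=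
      (continuous_const.mul (hgc.mul hgc)).continuousOn
    have hcont2 : ContinuousOn (fun t : ℝ => t ^ n) (spectrum ℝ b) :=
      (continuous_pow n).continuousOn
    have h1 : cfc (fun t => (r - ε) ^ n * (g t * g t)) b ≤ cfc (fun t : ℝ => t ^ n) b :=
      cfc_mono hpt hcont1 hcont2
    rwa [cfc_const_mul ((r - ε) ^ n) (fun t => g t * g t) b ((hgc.mul hgc).continuousOn),
      cfc_mul g g b hgc.continuousOn hgc.continuousOn, cfc_pow_id b n hbsa] at h1
  have hmono := mono _ _ hcfc
  have hsmul : ψ (((r - ε) ^ n : ℝ) • (y * y)) = ((r - ε) ^ n : ℝ) • ψ (y * y) :=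
    ψ.map_smul_of_tower _ _
  rw [hsmul] at hmono
  have heq : (((r - ε) ^ n : ℝ) • ψ (y * y)).re = (r - ε) ^ n * (ψ (y * y)).re :=
    Complex.smul_re _ _
  rw [heq] at hmono
  rw [hysa.star_eq] at hc
  rw [hc]
  linarith

end Aux

/-- if C*-probability spaces `(A⁽ᵏ⁾, φ⁽ᵏ⁾)` are adapted to the families
`X⁽ᵏ⁾` (faithful states, dense *-polynomial algebra) and `X⁽ᵏ⁾ → X` in moments, then
for every *-polynomial `P` (an element of the free *-algebra on the index set `M`,
evaluated by sending the two copies of `M` to the variables and their adjoints) and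
every nonprincipal ultrafilter `𝒰`, `‖P(X)‖ ≤ lim_𝒰 ‖P(X⁽ᵏ⁾)‖`. -/
theorem stmt_15 {M : Type*}
    (A : Type*) [NormedRing A] [StarRing A] [CStarRing A] [CompleteSpace A]
    [NormedAlgebra ℂ A] [StarModule ℂ A]
    (Ak : ℕ → Type*) [∀ k, NormedRing (Ak k)] [∀ k, StarRing (Ak k)]
    [∀ k, CStarRing (Ak k)] [∀ k, CompleteSpace (Ak k)]
    [∀ k, NormedAlgebra ℂ (Ak k)] [∀ k, StarModule ℂ (Ak k)]
    (X : M → A) (Xk : ∀ k, M → Ak k)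
    (φ : A →ₗ[ℂ] ℂ) (φk : ∀ k, Ak k →ₗ[ℂ] ℂ)
    (hφ1 : φ 1 = 1) (hφk1 : ∀ k, φk k 1 = 1)
    (hφpos : ∀ a : A, 0 ≤ (φ (star a * a)).re ∧ (φ (star a * a)).im = 0)
    (hφkpos : ∀ k, ∀ a : Ak k, 0 ≤ (φk k (star a * a)).re ∧ (φk k (star a * a)).im = 0)
    (hfaith : ∀ a : A, φ (star a * a) = 0 → a = 0)
    (hkfaith : ∀ k, ∀ a : Ak k, φk k (star a * a) = 0 → a = 0)
    (hdense : Dense (Set.range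
      (FreeAlgebra.lift ℂ (Sum.elim X fun m => star (X m)) : FreeAlgebra ℂ (M ⊕ M) → A)))
    (hkdense : ∀ k, Dense (Set.range
      (FreeAlgebra.lift ℂ (Sum.elim (Xk k) fun m => star (Xk k m)) :
        FreeAlgebra ℂ (M ⊕ M) → Ak k)))
    (hmom : ∀ P : FreeAlgebra ℂ (M ⊕ M),
      Tendsto (fun k => φk k (FreeAlgebra.lift ℂ (Sum.elim (Xk k) fun m => star (Xk k m)) P))
        atTop (𝓝 (φ (FreeAlgebra.lift ℂ (Sum.elim X fun m => star (X m)) P)))) :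
    ∀ P : FreeAlgebra ℂ (M ⊕ M), ∀ 𝒰 : Ultrafilter ℕ, (∀ k : ℕ, 𝒰 ≠ pure k) →
      ∀ L : ℝ,
        Tendsto (fun k => ‖FreeAlgebra.lift ℂ (Sum.elim (Xk k) fun m => star (Xk k m)) P‖)
          (𝒰 : Filter ℕ) (𝓝 L) →
        ‖FreeAlgebra.lift ℂ (Sum.elim X fun m => star (X m)) P‖ ≤ L := by
  intro P 𝒰 h𝒰 L hL
  -- the ultrafilter is finer than `atTop`
  have hle : (𝒰 : Filter ℕ) ≤ atTop := by
    rcases 𝒰.le_cofinite_or_eq_pure with h | ⟨a, ha⟩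
    · rwa [Nat.cofinite_eq_atTop] at h
    · exact absurd ha (h𝒰 a)
  have hL0 : 0 ≤ L := ge_of_tendsto hL (Eventually.of_forall fun k => norm_nonneg _)
  set T : FreeAlgebra ℂ (M ⊕ M) →ₐ[ℂ] A := FreeAlgebra.lift ℂ (Sum.elim X fun m => star (X m))
    with hT
  set Tk : ∀ k, FreeAlgebra ℂ (M ⊕ M) →ₐ[ℂ] Ak k :=
    fun k => FreeAlgebra.lift ℂ (Sum.elim (Xk k) fun m => star (Xk k m)) with hTk
  -- existence of formal adjoint polynomial
  obtain ⟨Q, hQA, hQk⟩ : ∃ Q, T Q = star (T P) ∧ ∀ k, Tk k Q = star (Tk k P) := by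
    clear hL hL0
    induction P using FreeAlgebra.induction with
    | grade0 z =>
        refine ⟨algebraMap ℂ _ (star z), ?_, fun k => ?_⟩ <;>
          rw [AlgHom.commutes, AlgHom.commutes, algebraMap_star_comm]
    | grade1 x =>
        cases x with
        | inl m =>
            refine ⟨FreeAlgebra.ι ℂ (Sum.inr m), ?_, fun k => ?_⟩ <;>
              simp [hT, hTk, FreeAlgebra.lift_ι_apply]
        | inr m =>
            refine ⟨FreeAlgebra.ι ℂ (Sum.inl m), ?_, fun k => ?_⟩ <;>
              simp [hT, hTk, FreeAlgebra.lift_ι_apply]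
    | mul p q hp hq =>
        obtain ⟨Qp, hp1, hp2⟩ := hp
        obtain ⟨Qq, hq1, hq2⟩ := hq
        exact ⟨Qq * Qp, by rw [map_mul, map_mul, hp1, hq1, star_mul],
          fun k => by rw [map_mul, map_mul, hp2 k, hq2 k, star_mul]⟩
    | add p q hp hq =>
        obtain ⟨Qp, hp1, hp2⟩ := hp
        obtain ⟨Qq, hq1, hq2⟩ := hq
        exact ⟨Qp + Qq, by rw [map_add, map_add, hp1, hq1, star_add],
          fun k => by rw [map_add, map_add, hp2 k, hq2 k, star_add]⟩
  -- key estimate: all moments of `star a * a` are dominated by powers of `L * L`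
  have key : ∀ n : ℕ, (φ ((star (T P) * T P) ^ n)).re ≤ (L * L) ^ n := by
    intro n
    have hmomn := (hmom ((Q * P) ^ n)).mono_left hle
    have heqA : φ (T ((Q * P) ^ n)) = φ ((star (T P) * T P) ^ n) := by
      rw [map_pow, map_mul, hQA]
    have heqk : (fun k => φk k (Tk k ((Q * P) ^ n)))
        = fun k => φk k ((star (Tk k P) * Tk k P) ^ n) := by
      funext k; rw [map_pow, map_mul, hQk k]
    rw [show (fun k => φk k (FreeAlgebra.lift ℂ (Sum.elim (Xk k) fun m => star (Xk k m))
        ((Q * P) ^ n))) = fun k => φk k (Tk k ((Q * P) ^ n)) from rfl, heqk] at hmomn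
    have h1 : Tendsto (fun k => (φk k ((star (Tk k P) * Tk k P) ^ n)).re) 𝒰
        (𝓝 ((φ ((star (T P) * T P) ^ n)).re)) := by
      have := (Complex.continuous_re.tendsto _).comp hmomn
      rwa [show φ (FreeAlgebra.lift ℂ (Sum.elim X fun m => star (X m)) ((Q * P) ^ n))
        = φ (T ((Q * P) ^ n)) from rfl, heqA] at this
    have h2 : Tendsto (fun k => (‖Tk k P‖ * ‖Tk k P‖) ^ n) 𝒰 (𝓝 ((L * L) ^ n)) :=
      (hL.mul hL).pow n
    exact le_of_tendsto_of_tendsto' h1 h2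
      (fun k => aux_upper (φk k) (hφk1 k) (fun b => (hφkpos k b).1) (Tk k P) n)
  -- conclude
  show ‖T P‖ ≤ L
  rcases eq_or_lt_of_le (norm_nonneg (T P)) with h0 | h0
  · rw [← h0]; exact hL0
  have hb0 : star (T P) * T P ≠ 0 := by
    intro h
    have := CStarRing.norm_star_mul_self (x := T P)
    rw [h, norm_zero] at this
    nlinarith
  have hrLL : ‖star (T P) * T P‖ ≤ L * L := by
    by_contra hlt
    push_neg at hlt
    set r := ‖star (T P) * T P‖ with hr
    set ε := (r - L * L) / 2 with hε
    have hLL0 : 0 ≤ L * L := mul_nonneg hL0 hL0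
    have hε0 : 0 < ε := by rw [hε]; linarith
    have hεr : ε < r := by rw [hε]; linarith
    obtain ⟨c, hc0, hcn⟩ := aux_lower φ (fun b => (hφpos b).1) (fun b => (hφpos b).2)
      hfaith (T P) hb0 hε0 hεr
    have hx0 : 0 < r - ε := by rw [hε]; linarith
    have hxgt : L * L < r - ε := by rw [hε]; linarith
    have hq : ∀ n : ℕ, c ≤ ((L * L) / (r - ε)) ^ n := by
      intro n
      have h1 : c * (r - ε) ^ n ≤ (L * L) ^ n := (hcn n).trans (key n)
      rw [div_pow, le_div_iff₀ (pow_pos hx0 n)]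
      linarith
    have hlim : Tendsto (fun n : ℕ => ((L * L) / (r - ε)) ^ n) atTop (𝓝 0) :=
      tendsto_pow_atTop_nhds_zero_of_lt_one (div_nonneg hLL0 hx0.le)
        ((div_lt_one hx0).mpr hxgt)
    have hcle : c ≤ 0 := ge_of_tendsto hlim (Eventually.of_forall hq)
    linarith
  have hnorm : ‖T P‖ * ‖T P‖ ≤ L * L := by
    rwa [CStarRing.norm_star_mul_self] at hrLL
  nlinarith [norm_nonneg (T P)]
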